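/- Let I = [a,b] and let c, τ : I → ℝ be continuous with c(t) < 0 and τ(t) > 0 for all t ∈ I, such that η : I → ℝ, η(t) = t − τ(t), is strictly increasing on I. Let J = η(I) ∪ I and let y : J → ℝ be continuous, continuously differentiable on I, satisfy y′(t) = c(t)·y(η(t)) for all t ∈ I, and suppose that for every t ∈ I the restriction of y to [η(t), t] is not identically zero. Then for all t¹, t² ∈ I with t¹ < t², one has V(y,[η(t²), t²]) ≤ V(y,[η(t¹), t¹]). -/

import Mathlib

open Set

/-- The set of integers `k ≥ 1` such that `φ` has `k` sign changes witnessed by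
points `s⁰ < s¹ < ⋯ < sᵏ` in `[a,b]` with `φ(sⁱ⁻¹)·φ(sⁱ) < 0`. -/
def scSet (φ : ℝ → ℝ) (a b : ℝ) : Set ℕ :=
  {k | 1 ≤ k ∧ ∃ s : ℕ → ℝ, (∀ i, i ≤ k → s i ∈ Set.Icc a b) ∧
    (∀ i, i < k → s i < s (i + 1)) ∧
    (∀ i, 1 ≤ i → i ≤ k → φ (s (i - 1)) * φ (s i) < 0)}

open Classical in
/-- The sign-change counting function `sc(φ,[a,b])` with values in `ℕ∞`. -/
noncomputable def sc (φ : ℝ → ℝ) (a b : ℝ) : ℕ∞ :=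
  if (∀ s ∈ Set.Icc a b, 0 ≤ φ s) ∨ (∀ s ∈ Set.Icc a b, φ s ≤ 0) then 0
  else sSup ((fun n : ℕ => (n : ℕ∞)) '' scSet φ a b)

open Classical in
/-- The discrete Lyapunov function `V(φ,[a,b])`: equals `sc(φ,[a,b])` if the latter
is odd or infinite, and `sc(φ,[a,b]) + 1` otherwise. -/
noncomputable def V (φ : ℝ → ℝ) (a b : ℝ) : ℕ∞ :=
  if ∃ n : ℕ, sc φ a b = (n : ℕ∞) ∧ Even n then sc φ a b + 1 else sc φ a b

/-- Membership in the regularity class `H_{[a,b]}` for a `C¹` function `φ` with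
derivative `φ'`: boundary nondegeneracy and all zeros simple. -/
def Hmem (φ φ' : ℝ → ℝ) (a b : ℝ) : Prop :=
  (φ b ≠ 0 ∨ φ a * φ' b < 0) ∧ (φ a ≠ 0 ∨ φ' a * φ b > 0) ∧
  ∀ s ∈ Set.Icc a b, φ s = 0 → φ' s ≠ 0

/- ======================= auxiliary sign helpers ======================= -/

lemma sgn_div {A B Z : ℝ} (h : 0 < (A * Z) * (B * Z)) : 0 < A * B := by
  rcases eq_or_ne Z 0 with rfl | hZ
  · simp at h
  · have h2 : 0 < ((A * Z) * (B * Z)) / Z ^ 2 := div_pos h (by positivity)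
    have h3 : ((A * Z) * (B * Z)) / Z ^ 2 = A * B := by field_simp
    linarith [h3 ▸ h2]

lemma sgn_divn {A B Z : ℝ} (h : (A * Z) * (B * Z) < 0) : A * B < 0 := by
  have h2 : 0 < (A * Z) * ((-B) * Z) := by nlinarith
  have := sgn_div h2
  nlinarith

/-- from `0 < P*R` and `P*Q < 0` infer `Q*R < 0`. -/
lemma sgnH1 {P Q R : ℝ} (h1 : 0 < P * R) (h2 : P * Q < 0) : Q * R < 0 := by
  refine sgn_divn (Z := P) ?_
  nlinarith [mul_neg_of_neg_of_pos h2 h1]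

/-- from `0 < P*R` and `0 < P*Q` infer `0 < Q*R`. -/
lemma sgnH2 {P Q R : ℝ} (h1 : 0 < P * R) (h2 : 0 < P * Q) : 0 < Q * R := by
  refine sgn_div (Z := P) ?_
  nlinarith [mul_pos h1 h2]

/-- from `P*R < 0` and `P*Q < 0` infer `0 < Q*R`. -/
lemma sgnH3 {P Q R : ℝ} (h1 : P * R < 0) (h2 : P * Q < 0) : 0 < Q * R := by
  refine sgn_div (Z := P) ?_
  nlinarith [mul_pos_of_neg_of_neg h2 h1]

/- ================ the mean-value-theorem pullback lemma ================ -/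

lemma pullback (a b : ℝ) (c η y y' : ℝ → ℝ)
    (hc_neg : ∀ t ∈ Set.Icc a b, c t < 0)
    (hη_mono : StrictMonoOn η (Set.Icc a b))
    (hy_cont : ContinuousOn y (η '' Set.Icc a b ∪ Set.Icc a b))
    (hy_deriv : ∀ t ∈ Set.Icc a b, HasDerivWithinAt y (y' t) (Set.Icc a b) t)
    (hy_ode : ∀ t ∈ Set.Icc a b, y' t = c t * y (η t))
    (u v : ℝ) (hau : a ≤ u) (huv : u < v) (hvb : v ≤ b)
    (hsign : y u * y v ≤ 0) (hv : y v ≠ 0) :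
    ∃ w, η u < w ∧ w < η v ∧ y w * y v < 0 := by
  have hsub : Set.Icc u v ⊆ Set.Icc a b := Set.Icc_subset_Icc hau hvb
  have hcont : ContinuousOn y (Set.Icc u v) :=
    (hy_cont.mono subset_union_right).mono hsub
  have hderiv : ∀ x ∈ Set.Ioo u v, HasDerivAt y (y' x) x := by
    intro x hx
    have hx' : x ∈ Set.Ioo a b := ⟨lt_of_le_of_lt hau hx.1, lt_of_lt_of_le hx.2 hvb⟩
    exact (hy_deriv x (Set.Ioo_subset_Icc_self hx')).hasDerivAt
      (Icc_mem_nhds hx'.1 hx'.2)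
  obtain ⟨ξ, hξ, hslope⟩ := exists_hasDerivAt_eq_slope y y' huv hcont hderiv
  have hξI : ξ ∈ Set.Icc a b := hsub (Set.Ioo_subset_Icc_self hξ)
  have huI : u ∈ Set.Icc a b := ⟨hau, le_trans huv.le hvb⟩
  have hvI : v ∈ Set.Icc a b := ⟨le_trans hau huv.le, hvb⟩
  have hode := hy_ode ξ hξI
  have hc := hc_neg ξ hξI
  refine ⟨η ξ, hη_mono huI hξI hξ.1, hη_mono hξI hvI hξ.2, ?_⟩
  have h1 : 0 < (y v - y u) * y v := by nlinarith [mul_self_pos.mpr hv]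
  have h3 : 0 < y' ξ * y v := by
    rw [hslope, div_mul_eq_mul_div]
    exact div_pos h1 (by linarith)
  rw [hode] at h3
  nlinarith

/- ====================== lemmas about sc and V ====================== -/

lemma scSet_anti {φ : ℝ → ℝ} {u v : ℝ} {m k : ℕ} (h : m ∈ scSet φ u v)
    (hk1 : 1 ≤ k) (hkm : k ≤ m) : k ∈ scSet φ u v := by
  obtain ⟨hm1, s, h1, h2, h3⟩ := h
  exact ⟨hk1, s, fun i hi => h1 i (hi.trans hkm),
    fun i hi => h2 i (lt_of_lt_of_le hi hkm), fun i ha hb => h3 i ha (hb.trans hkm)⟩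

lemma sc_ge_iff {φ : ℝ → ℝ} {u v : ℝ} {m : ℕ} (hm : 1 ≤ m) :
    (m : ℕ∞) ≤ sc φ u v ↔ m ∈ scSet φ u v := by
  constructor
  · intro h
    unfold sc at h
    split_ifs at h with hsd
    · exfalso
      have : m = 0 := by exact_mod_cast le_antisymm h zero_le
      omega
    · by_contra hm'
      have hb : ∀ k ∈ scSet φ u v, (k : ℕ∞) ≤ ((m - 1 : ℕ) : ℕ∞) := by
        intro k hk
        have hk_lt : k < m := by
          by_contra hge
          push_neg at hge
          exact hm' (scSet_anti hk hm hge)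
        exact_mod_cast Nat.le_sub_one_of_lt hk_lt
      have hs : sSup ((fun n : ℕ => (n : ℕ∞)) '' scSet φ u v) ≤ ((m - 1 : ℕ) : ℕ∞) := by
        apply sSup_le
        rintro x ⟨k, hk, rfl⟩
        exact hb k hk
      have : (m : ℕ∞) ≤ ((m - 1 : ℕ) : ℕ∞) := le_trans h hs
      have : m ≤ m - 1 := by exact_mod_cast this
      omega
  · intro h
    have hnsd : ¬ ((∀ s ∈ Set.Icc u v, 0 ≤ φ s) ∨ (∀ s ∈ Set.Icc u v, φ s ≤ 0)) := by
      obtain ⟨hm1, s, hmem, hmono, halt⟩ := h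
      have h01 := halt 1 le_rfl hm1
      simp only [Nat.sub_self] at h01
      rintro (hpos | hneg)
      · nlinarith [hpos (s 0) (hmem 0 (by omega)), hpos (s 1) (hmem 1 hm1)]
      · nlinarith [hneg (s 0) (hmem 0 (by omega)), hneg (s 1) (hmem 1 hm1)]
    unfold sc
    rw [if_neg hnsd]
    exact le_sSup ⟨m, h, rfl⟩

lemma one_le_V (φ : ℝ → ℝ) (u v : ℝ) : 1 ≤ V φ u v := by
  unfold V
  split_ifs with h
  · exact le_add_self
  · push_neg at h
    by_cases hT : sc φ u v = ⊤
    · rw [hT]; exact le_top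
    · obtain ⟨n, hn⟩ := WithTop.ne_top_iff_exists.1 hT
      have hne := h n hn.symm
      have : 1 ≤ n := by
        rcases Nat.eq_zero_or_pos n with rfl | h1
        · exact absurd Even.zero hne
        · exact h1
      rw [← hn]
      exact Nat.one_le_cast.mpr this

lemma sc_le_V (φ : ℝ → ℝ) (u v : ℝ) : sc φ u v ≤ V φ u v := by
  unfold V; split_ifs
  · exact le_self_add
  · exact le_rfl

lemma V_succ_le {φ : ℝ → ℝ} {u v : ℝ} {M : ℕ} (hMe : Even M)
    (h : (M : ℕ∞) ≤ sc φ u v) : ((M + 1 : ℕ) : ℕ∞) ≤ V φ u v := by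
  by_cases hT : sc φ u v = ⊤
  · have : V φ u v = ⊤ := by
      unfold V
      rw [hT]
      split_ifs with h'
      · obtain ⟨n, hn, _⟩ := h'
        exact absurd hn (by simp)
      · rfl
    rw [this]; exact le_top
  · obtain ⟨n1, hn1⟩ := WithTop.ne_top_iff_exists.1 hT
    have hMn : M ≤ n1 := by rw [← hn1] at h; exact Nat.cast_le.mp h
    rcases eq_or_lt_of_le hMn with rfl | hlt
    · have : V φ u v = (M : ℕ∞) + 1 := by
        unfold V
        rw [if_pos ⟨M, hn1.symm, hMe⟩, ← hn1]
        rfl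
      rw [this]
      push_cast
      exact le_rfl
    · calc ((M + 1 : ℕ) : ℕ∞) ≤ (n1 : ℕ∞) := by exact_mod_cast hlt
        _ = sc φ u v := hn1
        _ ≤ V φ u v := sc_le_V φ u v

/- ====================== the key step lemma ====================== -/

lemma keystep (a b : ℝ) (c τ η y y' : ℝ → ℝ)
    (hc_neg : ∀ t ∈ Set.Icc a b, c t < 0) (hτ_pos : ∀ t ∈ Set.Icc a b, 0 < τ t)
    (hη_def : ∀ t, η t = t - τ t) (hη_mono : StrictMonoOn η (Set.Icc a b))
    (hy_cont : ContinuousOn y (η '' Set.Icc a b ∪ Set.Icc a b))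
    (hy_deriv : ∀ t ∈ Set.Icc a b, HasDerivWithinAt y (y' t) (Set.Icc a b) t)
    (hy_ode : ∀ t ∈ Set.Icc a b, y' t = c t * y (η t))
    (x1 x2 : ℝ) (hx1 : x1 ∈ Set.Icc a b) (hx2 : x2 ∈ Set.Icc a b)
    (h12 : x1 < x2) (hov : η x2 ≤ x1)
    (m : ℕ) (hm2 : 2 ≤ m) (hme : Even m)
    (hmem : m ∈ scSet y (η x2) x2) : m ∈ scSet y (η x1) x1 := by
  obtain ⟨hm1, s, hsmem, hsmono, hsalt⟩ := hmem
  obtain ⟨r, hr⟩ := hme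
  have ha1 : a ≤ x1 := hx1.1
  have hb1 : x1 ≤ b := hx1.2
  have ha2 : a ≤ x2 := hx2.1
  have hb2 : x2 ≤ b := hx2.2
  have hηlt : ∀ t ∈ Set.Icc a b, η t < t := fun t ht => by
    rw [hη_def]; linarith [hτ_pos t ht]
  have hηle : ∀ u ∈ Set.Icc a b, ∀ v ∈ Set.Icc a b, u ≤ v → η u ≤ η v := by
    intro u hu v hv huv
    rcases eq_or_lt_of_le huv with rfl | h
    · exact le_rfl
    · exact (hη_mono hu hv h).le
  have hη12 : η x1 ≤ η x2 := hηle x1 hx1 x2 hx2 h12.le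
  have hηx1 : η x1 < x1 := hηlt x1 hx1
  -- strict monotonicity of s on [0, m]
  have smono : ∀ i k : ℕ, i < k → k ≤ m → s i < s k := by
    intro i k
    induction k with
    | zero => omega
    | succ k ih =>
      intro hik hkm
      rcases Nat.lt_succ_iff_lt_or_eq.1 hik with h | rfl
      · exact lt_trans (ih h (by omega)) (hsmono k (by omega))
      · exact hsmono i (by omega)
  -- alternating sign formula for s
  have salt2 : ∀ i, i ≤ m → 0 < y (s i) * (y (s 0) * (-1 : ℝ) ^ i) := by
    intro i
    induction i with
    | zero =>
      intro _
      have h01 := hsalt 1 le_rfl hm1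
      simp only [Nat.sub_self] at h01
      simp only [pow_zero, mul_one]
      have hne : y (s 0) ≠ 0 := by
        intro h0
        rw [h0, zero_mul] at h01
        exact absurd h01 (lt_irrefl 0)
      exact mul_self_pos.mpr hne
    | succ i ih =>
      intro him
      have h1 := ih (by omega)
      have h2 := hsalt (i + 1) (by omega) him
      simp only [Nat.add_sub_cancel] at h2
      have hexp : y (s 0) * (-1 : ℝ) ^ (i + 1) = -(y (s 0) * (-1) ^ i) := by
        rw [pow_succ]; ring
      rw [hexp]
      have := sgnH1 (P := y (s i)) (Q := y (s (i + 1))) (R := y (s 0) * (-1) ^ i) h1 h2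
      linarith
  have hsne : ∀ i, i ≤ m → y (s i) ≠ 0 := by
    intro i him h0
    have := salt2 i him
    rw [h0] at this
    simp at this
  have hpowper : ∀ k₁ k₂ : ℕ, k₁ % 2 = k₂ % 2 → ((-1 : ℝ)) ^ k₁ = (-1) ^ k₂ := by
    intro k1 k2 h
    rw [← Nat.div_add_mod k1 2, ← Nat.div_add_mod k2 2, pow_add, pow_add,
      pow_mul, pow_mul, neg_one_sq, one_pow, one_pow, h]
  by_cases hex : ∃ i, i ≤ m ∧ x1 < s i
  · -- some witness points lie to the right of x1
    classical
    set j := Nat.find hex with hjdef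
    obtain ⟨hjm, hjgt⟩ : j ≤ m ∧ x1 < s j := Nat.find_spec hex
    have hjmin : ∀ i, i < j → i ≤ m → s i ≤ x1 := by
      intro i hi him
      have := Nat.find_min hex hi
      push_neg at this
      exact this him
    have hsgt : ∀ i, j ≤ i → i ≤ m → x1 < s i := by
      intro i hji him
      rcases eq_or_lt_of_le hji with rfl | h
      · exact hjgt
      · exact lt_trans hjgt (smono j i h him)
    have hsIab : ∀ i, j ≤ i → i ≤ m → s i ∈ Set.Icc a b :=
      fun i h1 h2 => ⟨le_trans ha1 (hsgt i h1 h2).le, le_trans (hsmem i h2).2 hb2⟩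
    have hsx2 : ∀ i, i ≤ m → s i ≤ x2 := fun i h => (hsmem i h).2
    have hsl : ∀ i, i ≤ m → η x2 ≤ s i := fun i h => (hsmem i h).1
    -- pullback points for pairs strictly to the right of x1
    have hP : ∀ i, j + 1 ≤ i → i ≤ m →
        ∃ w, η (s (i - 1)) < w ∧ w < η (s i) ∧ y w * y (s i) < 0 := by
      intro i h1 h2
      exact pullback a b c η y y' hc_neg hη_mono hy_cont hy_deriv hy_ode
        (s (i - 1)) (s i) (hsIab (i - 1) (by omega) (by omega)).1
        (smono (i - 1) i (by omega) h2) (le_trans (hsx2 i h2) hb2)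
        (hsalt i (by omega) h2).le (hsne i h2)
    choose! p hp1 hp2 hp3 using hP
    have hpmemL : ∀ i, j + 1 ≤ i → i ≤ m → η x1 < p i := by
      intro i h1 h2
      exact lt_trans (hη_mono hx1 (hsIab (i - 1) (by omega) (by omega))
        (hsgt (i - 1) (by omega) (by omega))) (hp1 i h1 h2)
    have hpmemR : ∀ i, j + 1 ≤ i → i ≤ m → p i < η x2 := by
      intro i h1 h2
      exact lt_of_lt_of_le (hp2 i h1 h2)
        (hηle (s i) (hsIab i (by omega) h2) x2 hx2 (hsx2 i h2))
    have hpmono : ∀ i, j + 1 ≤ i → i + 1 ≤ m → p i < p (i + 1) := by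
      intro i h1 h2
      have hu := hp2 i h1 (by omega)
      have hv := hp1 (i + 1) (by omega) h2
      simp only [Nat.add_sub_cancel] at hv
      exact lt_trans hu hv
    have hpsgn : ∀ i, j + 1 ≤ i → i ≤ m → 0 < y (p i) * y (s (i - 1)) := by
      intro i h1 h2
      have e1 : y (s i) * y (s (i - 1)) < 0 := by linarith [hsalt i (by omega) h2]
      have e2 : y (s i) * y (p i) < 0 := by linarith [hp3 i h1 h2]
      have := sgnH3 e1 e2
      linarith
    have hpsgn2 : ∀ i, j + 1 ≤ i → i ≤ m →
        0 < y (p i) * (y (s 0) * (-1 : ℝ) ^ (i - 1)) := by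
      intro i h1 h2
      have e1 := hpsgn i h1 h2
      have e2 := salt2 (i - 1) (by omega)
      have := sgnH2 (P := y (s (i - 1))) (R := y (p i))
        (Q := y (s 0) * (-1 : ℝ) ^ (i - 1)) (by linarith) e2
      linarith
    by_cases hC : 0 < y x1 * y (s j)
    · -- Case C : append x1 at the right end
      set u : ℕ → ℝ := fun i =>
        if i < m - j then p (j + 1 + i) else if i < m then s (i - (m - j)) else x1
        with hudef
      have husgn : ∀ i, i ≤ m → 0 < y (u i) * (y (s 0) * (-1 : ℝ) ^ (j + i)) := by
        intro i him
        by_cases h1 : i < m - j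
        · have hui : u i = p (j + 1 + i) := by simp only [hudef, if_pos h1]
          rw [hui]
          have := hpsgn2 (j + 1 + i) (by omega) (by omega)
          rw [show j + 1 + i - 1 = j + i from by omega] at this
          exact this
        · by_cases h2 : i < m
          · have hui : u i = s (i - (m - j)) := by
              simp only [hudef, if_neg h1, if_pos h2]
            rw [hui, hpowper (j + i) (i - (m - j)) (by omega)]
            exact salt2 (i - (m - j)) (by omega)
          · have hui : u i = x1 := by simp only [hudef, if_neg h1, if_neg h2]
            rw [hui, hpowper (j + i) j (by omega)]
            have := sgnH2 (P := y (s j)) (R := y x1)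
              (Q := y (s 0) * (-1 : ℝ) ^ j) (by linarith) (salt2 j hjm)
            linarith
      refine ⟨hm1, u, ?_, ?_, ?_⟩
      · -- membership
        intro i him
        by_cases h1 : i < m - j
        · have hui : u i = p (j + 1 + i) := by simp only [hudef, if_pos h1]
          rw [hui]
          exact ⟨(hpmemL (j + 1 + i) (by omega) (by omega)).le,
            le_trans (hpmemR (j + 1 + i) (by omega) (by omega)).le hov⟩
        · by_cases h2 : i < m
          · have hui : u i = s (i - (m - j)) := by
              simp only [hudef, if_neg h1, if_pos h2]
            rw [hui]
            exact ⟨le_trans hη12 (hsl (i - (m - j)) (by omega)),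
              hjmin (i - (m - j)) (by omega) (by omega)⟩
          · have hui : u i = x1 := by simp only [hudef, if_neg h1, if_neg h2]
            rw [hui]
            exact ⟨hηx1.le, le_rfl⟩
      · -- monotone
        intro i him
        by_cases h1 : i + 1 < m - j
        · have e1 : u i = p (j + 1 + i) := by
            simp only [hudef, if_pos (show i < m - j by omega)]
          have e2 : u (i + 1) = p (j + 1 + (i + 1)) := by simp only [hudef, if_pos h1]
          rw [e1, e2, show j + 1 + (i + 1) = (j + 1 + i) + 1 from by omega]
          exact hpmono (j + 1 + i) (by omega) (by omega)
        · by_cases h2 : i < m - j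
          · have e1 : u i = p (j + 1 + i) := by simp only [hudef, if_pos h2]
            have hlast : j + 1 + i = m := by omega
            by_cases h3 : i + 1 < m
            · have e2 : u (i + 1) = s (i + 1 - (m - j)) := by
                simp only [hudef, if_neg h1, if_pos h3]
              rw [e1, e2, show i + 1 - (m - j) = 0 from by omega, hlast]
              exact lt_of_lt_of_le (hpmemR m (by omega) le_rfl) (hsl 0 (by omega))
            · have e2 : u (i + 1) = x1 := by simp only [hudef, if_neg h1, if_neg h3]
              rw [e1, e2, hlast]
              exact lt_of_lt_of_le (hpmemR m (by omega) le_rfl) hov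
          · have e1 : u i = s (i - (m - j)) := by
              simp only [hudef, if_neg h2, if_pos (show i < m by omega)]
            by_cases h3 : i + 1 < m
            · have e2 : u (i + 1) = s (i + 1 - (m - j)) := by
                simp only [hudef, if_neg h1, if_pos h3]
              rw [e1, e2, show i + 1 - (m - j) = (i - (m - j)) + 1 from by omega]
              exact hsmono (i - (m - j)) (by omega)
            · have e2 : u (i + 1) = x1 := by simp only [hudef, if_neg h1, if_neg h3]
              have hk : i - (m - j) = j - 1 := by omega
              have hj1 : 1 ≤ j := by omega
              rw [e1, e2, hk]
              have hne : y (s (j - 1)) * y x1 < 0 := by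
                have e3 : y (s j) * y (s (j - 1)) < 0 := by
                  linarith [hsalt j hj1 hjm]
                have e4 : 0 < y (s j) * y x1 := by linarith
                exact sgnH1 e4 e3
              rcases eq_or_lt_of_le (hjmin (j - 1) (by omega) (by omega)) with heq | hlt
              · exfalso; rw [heq] at hne; nlinarith [mul_self_nonneg (y x1)]
              · exact hlt
      · -- alternating
        intro i hi1 him
        obtain ⟨i', rfl⟩ : ∃ i', i = i' + 1 := ⟨i - 1, by omega⟩
        have a1 := husgn i' (by omega)
        have a2 := husgn (i' + 1) him
        have hexp : y (s 0) * (-1 : ℝ) ^ (j + (i' + 1)) =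
            -(y (s 0) * (-1) ^ (j + i')) := by
          rw [show j + (i' + 1) = (j + i') + 1 from by omega, pow_succ]; ring
        rw [hexp] at a2
        simp only [Nat.add_sub_cancel]
        have hD := sgnH1 (P := y (s 0) * (-1 : ℝ) ^ (j + i')) (Q := y (u (i' + 1)))
          (R := y (u i')) (by linarith) (by linarith)
        linarith
    · -- Case D : prepend a pullback point q at the left end
      push_neg at hC
      obtain ⟨q, hq1, hq2, hq3⟩ := pullback a b c η y y' hc_neg hη_mono hy_cont
        hy_deriv hy_ode x1 (s j) ha1 hjgt (le_trans (hsx2 j hjm) hb2) hC (hsne j hjm)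
      have hqR : q < x1 := lt_of_lt_of_le hq2
        (le_trans (hηle (s j) (hsIab j le_rfl hjm) x2 hx2 (hsx2 j hjm)) hov)
      set u : ℕ → ℝ := fun i =>
        if i = 0 then q else if i < m - j + 1 then p (j + i) else s (i - (m - j + 1))
        with hudef
      have husgn : ∀ i, i ≤ m → 0 < y (u i) * (y (s 0) * (-1 : ℝ) ^ (j + i + 1)) := by
        intro i him
        by_cases h0 : i = 0
        · have hui : u i = q := by simp only [hudef, if_pos h0]
          rw [hui]
          have e1 : y (s j) * y q < 0 := by linarith
          have := sgnH1 (P := y (s j)) (Q := y q)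
            (R := y (s 0) * (-1 : ℝ) ^ j) (salt2 j hjm) e1
          have hexp : y (s 0) * (-1 : ℝ) ^ (j + i + 1) =
              -(y (s 0) * (-1) ^ j) := by
            rw [hpowper (j + i + 1) (j + 1) (by omega), pow_succ]; ring
          rw [hexp]
          linarith
        · by_cases h2 : i < m - j + 1
          · have hui : u i = p (j + i) := by simp only [hudef, if_neg h0, if_pos h2]
            rw [hui, hpowper (j + i + 1) (j + i - 1) (by omega)]
            have := hpsgn2 (j + i) (by omega) (by omega)
            rw [show j + i - 1 = j + i - 1 from rfl] at this
            exact this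
          · have hui : u i = s (i - (m - j + 1)) := by
              simp only [hudef, if_neg h0, if_neg h2]
            rw [hui, hpowper (j + i + 1) (i - (m - j + 1)) (by omega)]
            exact salt2 (i - (m - j + 1)) (by omega)
      refine ⟨hm1, u, ?_, ?_, ?_⟩
      · -- membership
        intro i him
        by_cases h0 : i = 0
        · have hui : u i = q := by simp only [hudef, if_pos h0]
          rw [hui]
          exact ⟨hq1.le, hqR.le⟩
        · by_cases h2 : i < m - j + 1
          · have hui : u i = p (j + i) := by simp only [hudef, if_neg h0, if_pos h2]
            rw [hui]
            exact ⟨(hpmemL (j + i) (by omega) (by omega)).le,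
              le_trans (hpmemR (j + i) (by omega) (by omega)).le hov⟩
          · have hui : u i = s (i - (m - j + 1)) := by
              simp only [hudef, if_neg h0, if_neg h2]
            rw [hui]
            exact ⟨le_trans hη12 (hsl (i - (m - j + 1)) (by omega)),
              hjmin (i - (m - j + 1)) (by omega) (by omega)⟩
      · -- monotone
        intro i him
        by_cases h0 : i = 0
        · subst h0
          have e1 : u 0 = q := by simp only [hudef, if_pos rfl]
          by_cases h2 : 1 < m - j + 1
          · have e2 : u 1 = p (j + 1) := by
              simp only [hudef, if_neg one_ne_zero, if_pos h2]
            have hv := hp1 (j + 1) le_rfl (by omega)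
            simp only [Nat.add_sub_cancel] at hv
            rw [e1, e2]
            exact lt_trans hq2 hv
          · have e2 : u 1 = s (1 - (m - j + 1)) := by
              simp only [hudef, if_neg one_ne_zero, if_neg h2]
            rw [e1, e2, show 1 - (m - j + 1) = 0 from by omega]
            exact lt_of_lt_of_le hq2
              (le_trans (hηle (s j) (hsIab j le_rfl hjm) x2 hx2 (hsx2 j hjm))
                (hsl 0 (by omega)))
        · by_cases h1 : i + 1 < m - j + 1
          · have e1 : u i = p (j + i) := by
              simp only [hudef, if_neg h0, if_pos (show i < m - j + 1 by omega)]
            have e2 : u (i + 1) = p (j + (i + 1)) := by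
              simp only [hudef, if_neg (Nat.succ_ne_zero i), if_pos h1]
            rw [e1, e2, show j + (i + 1) = (j + i) + 1 from by omega]
            exact hpmono (j + i) (by omega) (by omega)
          · by_cases h2 : i < m - j + 1
            · -- junction p → s : here j + i = m
              have e1 : u i = p (j + i) := by
                simp only [hudef, if_neg h0, if_pos h2]
              have e2 : u (i + 1) = s (i + 1 - (m - j + 1)) := by
                simp only [hudef, if_neg (Nat.succ_ne_zero i), if_neg h1]
              have hlast : j + i = m := by omega
              rw [e1, e2, show i + 1 - (m - j + 1) = 0 from by omega, hlast]
              exact lt_of_lt_of_le (hpmemR m (by omega) le_rfl) (hsl 0 (by omega))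
            · have e1 : u i = s (i - (m - j + 1)) := by
                simp only [hudef, if_neg h0, if_neg h2]
              have e2 : u (i + 1) = s (i + 1 - (m - j + 1)) := by
                simp only [hudef, if_neg (Nat.succ_ne_zero i), if_neg (show ¬ (i + 1 < m - j + 1) by omega)]
              rw [e1, e2, show i + 1 - (m - j + 1) = (i - (m - j + 1)) + 1 from by omega]
              exact hsmono (i - (m - j + 1)) (by omega)
      · -- alternating
        intro i hi1 him
        obtain ⟨i', rfl⟩ : ∃ i', i = i' + 1 := ⟨i - 1, by omega⟩
        have a1 := husgn i' (by omega)
        have a2 := husgn (i' + 1) him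
        have hexp : y (s 0) * (-1 : ℝ) ^ (j + (i' + 1) + 1) =
            -(y (s 0) * (-1) ^ (j + i' + 1)) := by
          rw [show j + (i' + 1) + 1 = (j + i' + 1) + 1 from by omega, pow_succ]; ring
        rw [hexp] at a2
        simp only [Nat.add_sub_cancel]
        have hD := sgnH1 (P := y (s 0) * (-1 : ℝ) ^ (j + i' + 1)) (Q := y (u (i' + 1)))
          (R := y (u i')) (by linarith) (by linarith)
        linarith
  · -- all witness points are ≤ x1 : reuse s
    push_neg at hex
    refine ⟨hm1, s, ?_, hsmono, hsalt⟩
    intro i him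
    exact ⟨le_trans hη12 (hsmem i him).1, hex i him⟩

/- ====================== the main theorem ====================== -/

/-- Monotonicity of the discrete Lyapunov function along solutions of the linear
delay equation `y′(t) = c(t)·y(η(t))` with negative coefficient: for `t¹ < t²` in
`I = [a,b]`, one has `V(y,[η(t²),t²]) ≤ V(y,[η(t¹),t¹])`. -/
theorem V_monotone_along_solutions
    (a b : ℝ) (hab : a ≤ b)
    (c τ : ℝ → ℝ)
    (hc_cont : ContinuousOn c (Set.Icc a b)) (hτ_cont : ContinuousOn τ (Set.Icc a b))
    (hc_neg : ∀ t ∈ Set.Icc a b, c t < 0) (hτ_pos : ∀ t ∈ Set.Icc a b, 0 < τ t)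
    (η : ℝ → ℝ) (hη_def : ∀ t, η t = t - τ t)
    (hη_mono : StrictMonoOn η (Set.Icc a b))
    (y y' : ℝ → ℝ)
    (hy_cont : ContinuousOn y (η '' Set.Icc a b ∪ Set.Icc a b))
    (hy_deriv : ∀ t ∈ Set.Icc a b, HasDerivWithinAt y (y' t) (Set.Icc a b) t)
    (hy'_cont : ContinuousOn y' (Set.Icc a b))
    (hy_ode : ∀ t ∈ Set.Icc a b, y' t = c t * y (η t))
    (hy_ne : ∀ t ∈ Set.Icc a b, ∃ s ∈ Set.Icc (η t) t, y s ≠ 0) :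
    ∀ t1 ∈ Set.Icc a b, ∀ t2 ∈ Set.Icc a b, t1 < t2 →
      V y (η t2) t2 ≤ V y (η t1) t1 := by
  intro t1 ht1 t2 ht2 h12
  -- a positive lower bound for the delay
  obtain ⟨t0, ht0, hmin⟩ := isCompact_Icc.exists_isMinOn (Set.nonempty_Icc.mpr hab)
    hτ_cont
  set δ := τ t0 with hδdef
  have hδpos : 0 < δ := hτ_pos t0 ht0
  have hmin' : ∀ x ∈ Set.Icc a b, δ ≤ τ x := fun x hx => hmin hx
  have hηlt : ∀ t ∈ Set.Icc a b, η t < t := fun t ht => by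
    rw [hη_def]; linarith [hτ_pos t ht]
  -- chaining of the key step
  have CHAIN : ∀ n : ℕ, ∀ u ∈ Set.Icc a b, ∀ v ∈ Set.Icc a b, u < v →
      v - u ≤ n * δ → ∀ m : ℕ, 2 ≤ m → Even m →
      m ∈ scSet y (η v) v → m ∈ scSet y (η u) u := by
    intro n
    induction n with
    | zero =>
      intro u hu v hv huv hle
      exfalso
      simp only [Nat.cast_zero, zero_mul] at hle
      linarith
    | succ n ih =>
      intro u hu v hv huv hle m hm2 hme hmem
      by_cases hsmall : η v ≤ u
      · exact keystep a b c τ η y y' hc_neg hτ_pos hη_def hη_mono hy_cont hy_deriv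
          hy_ode u v hu hv huv hsmall m hm2 hme hmem
      · push_neg at hsmall
        have hηv_mem : η v ∈ Set.Icc a b :=
          ⟨le_trans hu.1 hsmall.le, le_trans (hηlt v hv).le hv.2⟩
        have hstep := keystep a b c τ η y y' hc_neg hτ_pos hη_def hη_mono hy_cont
          hy_deriv hy_ode (η v) v hηv_mem hv (hηlt v hv) le_rfl m hm2 hme hmem
        have hτv : δ ≤ τ v := hmin' v hv
        have hle' : η v - u ≤ n * δ := by
          rw [hη_def]
          push_cast at hle ⊢
          linarith
        exact ih u hu (η v) hηv_mem hsmall hle' m hm2 hme hstep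
  have SC : ∀ m : ℕ, 2 ≤ m → Even m →
      (m : ℕ∞) ≤ sc y (η t2) t2 → (m : ℕ∞) ≤ sc y (η t1) t1 := by
    intro m hm2 hme h
    obtain ⟨n, hn⟩ := exists_nat_ge ((t2 - t1) / δ)
    have hle : t2 - t1 ≤ n * δ := by
      rw [div_le_iff₀ hδpos] at hn
      linarith
    exact (sc_ge_iff (by omega)).mpr
      (CHAIN n t1 ht1 t2 ht2 h12 hle m hm2 hme ((sc_ge_iff (by omega)).mp h))
  -- conclude the V inequality
  by_cases hT : sc y (η t2) t2 = ⊤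
  · have hS1 : sc y (η t1) t1 = ⊤ := by
      by_contra h1T
      obtain ⟨n1, hn1⟩ := WithTop.ne_top_iff_exists.1 h1T
      have h2 : ((2 * n1 + 2 : ℕ) : ℕ∞) ≤ sc y (η t1) t1 :=
        SC (2 * n1 + 2) (by omega) ⟨n1 + 1, by ring⟩ (by rw [hT]; exact le_top)
      rw [← hn1] at h2
      have : 2 * n1 + 2 ≤ n1 := Nat.cast_le.mp h2
      omega
    have hV1 : V y (η t1) t1 = ⊤ := by
      unfold V
      rw [hS1]
      split_ifs with h'
      · obtain ⟨k, hk, _⟩ := h'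
        exact absurd hk (by simp)
      · rfl
    rw [hV1]
    exact le_top
  · obtain ⟨n, hn⟩ := WithTop.ne_top_iff_exists.1 hT
    have hV2 : V y (η t2) t2 ≤ ((if Even n then n + 1 else n : ℕ) : ℕ∞) := by
      unfold V
      split_ifs with h h2 h2
      · rw [← hn]
        push_cast
        exact le_rfl
      · obtain ⟨k, hk, hke⟩ := h
        rw [← hn] at hk
        have : n = k := Nat.cast_injective hk
        exact absurd (this ▸ hke) h2
      · exact absurd ⟨n, hn.symm, h2⟩ h
      · rw [← hn]; exact le_rfl
    by_cases hn1 : n ≤ 1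
    · calc V y (η t2) t2 ≤ ((if Even n then n + 1 else n : ℕ) : ℕ∞) := hV2
        _ ≤ 1 := by
          interval_cases n
          · simp
          · simp
        _ ≤ V y (η t1) t1 := one_le_V y (η t1) t1
    · push_neg at hn1
      set M := if Even n then n else n - 1 with hMdef
      have hMe : Even M := by
        rw [hMdef]
        split_ifs with h
        · exact h
        · rcases Nat.even_or_odd n with h' | h'
          · exact absurd h' h
          · obtain ⟨k, hk⟩ := h'
            exact ⟨k, by omega⟩
      have hM2 : 2 ≤ M := by
        rw [hMdef]
        split_ifs with h
        · omega
        · rcases Nat.even_or_odd n with h' | h'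
          · exact absurd h' h
          · obtain ⟨k, hk⟩ := h'
            omega
      have hMn : M ≤ n := by rw [hMdef]; split_ifs <;> omega
      have hMS2 : (M : ℕ∞) ≤ sc y (η t2) t2 := by
        rw [← hn]
        exact Nat.cast_le.mpr hMn
      have hMS1 := SC M hM2 hMe hMS2
      have hfin := V_succ_le hMe hMS1
      have hNM : (if Even n then n + 1 else n : ℕ) = M + 1 := by
        rw [hMdef]
        split_ifs <;> omega
      calc V y (η t2) t2 ≤ ((if Even n then n + 1 else n : ℕ) : ℕ∞) := hV2
        _ = ((M + 1 : ℕ) : ℕ∞) := by rw [hNM]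
        _ ≤ V y (η t1) t1 := hfin
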